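/- arXiv:2011.09093 — 2 statements merged into one kernel-verified Lean document; each statement's English description precedes it below -/
import Mathlib

section
/- A matrix A ∈ F_2^{n×n} is not an (r, s)-rigid matrix if and only if there exists a linear subspace X ⊆ F_2^n of dimension at least n − r and a matrix C with at most s non-zero entries in each row such that Ax = Cx for all x ∈ X. -/
/-- A matrix `A ∈ F₂^{n×n}` is `(r, s)`-rigid if it cannot be written as `A = B + C`
where `B` has rank at most `r` and `C` has at most `s` non-zero entries in each row. -/
def IsRigidMatrix {n : ℕ} (A : Matrix (Fin n) (Fin n) (ZMod 2)) (r s : ℕ) : Prop :=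
  ¬ ∃ B C : Matrix (Fin n) (Fin n) (ZMod 2), A = B + C ∧ B.rank ≤ r ∧
      ∀ i, (Finset.univ.filter fun j => C i j ≠ 0).card ≤ s

theorem stmt_4 {n : ℕ} (A : Matrix (Fin n) (Fin n) (ZMod 2)) (r s : ℕ) :
    ¬ IsRigidMatrix A r s ↔
      ∃ X : Submodule (ZMod 2) (Fin n → ZMod 2), n - r ≤ Module.finrank (ZMod 2) X ∧
        ∃ C : Matrix (Fin n) (Fin n) (ZMod 2),
          (∀ i, (Finset.univ.filter fun j => C i j ≠ 0).card ≤ s) ∧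
          ∀ x ∈ X, A.mulVec x = C.mulVec x := by
  constructor
  · intro h
    simp only [IsRigidMatrix, not_not] at h
    obtain ⟨B, C, hA, hB, hC⟩ := h
    refine ⟨LinearMap.ker B.mulVecLin, ?_, C, hC, ?_⟩
    · have h1 := LinearMap.finrank_range_add_finrank_ker B.mulVecLin
      have h2 : Module.finrank (ZMod 2) (Fin n → ZMod 2) = n := by simp
      have h3 : B.rank = Module.finrank (ZMod 2) (LinearMap.range B.mulVecLin) := rfl
      omega
    · intro x hx
      have hx0 : B.mulVec x = 0 := hx
      simp [hA, Matrix.add_mulVec, hx0]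
  · rintro ⟨X, hX, C, hC, hAC⟩
    simp only [IsRigidMatrix, not_not]
    refine ⟨A - C, C, by abel, ?_, hC⟩
    have hker : X ≤ LinearMap.ker (A - C).mulVecLin := by
      intro x hx
      have : (A - C).mulVec x = 0 := by
        simp [Matrix.sub_mulVec, hAC x hx]
      exact this
    have h1 := LinearMap.finrank_range_add_finrank_ker (A - C).mulVecLin
    have h2 := Submodule.finrank_mono hker
    have h3 : Module.finrank (ZMod 2) (Fin n → ZMod 2) = n := by simp
    have h4 : (A - C).rank = Module.finrank (ZMod 2) (LinearMap.range (A - C).mulVecLin) := rfl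
    omega
end

section
/- Suppose there is a universal constant c > 0 such that every (r, s)-rigid matrix A ∈ F_2^{n×n}, viewed as a linear function A : F_2^n → F_2^n, is a (cr, cs)-rigid function. Then there is a constant c' > 0 such that every linear function f : F_2^n → F_2^n computable by a depth-2 circuit of width w and degree d is computable by a depth-2 circuit of width c'·w and degree c'·d all of whose gates compute F_2-linear functions. -/
/-- `(r, s)`-rigidity for a function `F₂ⁿ → F₂ⁿ`. -/
def IsRigidFunc (n : ℕ) (f : (Fin n → ZMod 2) → Fin n → ZMod 2) (r s : ℝ) : Prop :=
  ∀ X : Finset (Fin n → ZMod 2), (2 : ℝ) ^ ((n : ℝ) - r) ≤ X.card →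
    ∀ S : Fin n → Finset (Fin n), (∀ i, ((S i).card : ℝ) ≤ s) →
      ∀ g : Fin n → (Fin n → ZMod 2) → ZMod 2,
        (∀ i x y, (∀ j ∈ S i, x j = y j) → g i x = g i y) →
        ∃ x ∈ X, f x ≠ fun i => g i x

/-- `f` is computable by a depth-2 circuit of width `w` and degree `d` (arbitrary boolean
gates): middle gates `h₁, …, h_w`, and each output gate computes an arbitrary function of
the middle-gate values and of at most `d` directly-wired inputs. -/
def Depth2 (n m w d : ℕ) (f : (Fin n → ZMod 2) → Fin m → ZMod 2) : Prop :=
  ∃ (h : Fin w → (Fin n → ZMod 2) → ZMod 2) (S : Fin m → Finset (Fin n))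
    (g : Fin m → (Fin n → ZMod 2) → (Fin w → ZMod 2) → ZMod 2),
    (∀ i, (S i).card ≤ d) ∧
    (∀ i x y hv, (∀ j ∈ S i, x j = y j) → g i x hv = g i y hv) ∧
    ∀ x i, f x i = g i x fun t => h t x

/-- `f` is computable by a depth-2 circuit of width `w` and degree `d` all of whose gates
compute `F₂`-linear functions: the middle layer computes `H·x`, and output `i` computes a
linear combination of the middle values and of at most `d` directly-wired inputs. -/
def LinDepth2 (n w : ℕ) (d : ℝ) (f : (Fin n → ZMod 2) → Fin n → ZMod 2) : Prop :=
  ∃ (H : Matrix (Fin w) (Fin n) (ZMod 2)) (S : Fin n → Finset (Fin n))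
    (C : Matrix (Fin n) (Fin n) (ZMod 2)) (D : Matrix (Fin n) (Fin w) (ZMod 2)),
    (∀ i, ((S i).card : ℝ) ≤ d) ∧ (∀ i j, j ∉ S i → C i j = 0) ∧
    ∀ x, f x = C.mulVec x + D.mulVec (H.mulVec x)


open Matrix Finset

lemma exists_matrix_of_linear {n : ℕ} (f : (Fin n → ZMod 2) → Fin n → ZMod 2)
    (hf : IsLinearMap (ZMod 2) f) :
    ∃ A : Matrix (Fin n) (Fin n) (ZMod 2), ∀ x, f x = A.mulVec x := by
  refine ⟨LinearMap.toMatrix' (IsLinearMap.mk' f hf), fun x => ?_⟩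
  have h := Matrix.toLin'_toMatrix' (IsLinearMap.mk' f hf)
  calc f x = (IsLinearMap.mk' f hf) x := rfl
    _ = (Matrix.toLin' (LinearMap.toMatrix' (IsLinearMap.mk' f hf))) x := by rw [h]
    _ = _ := Matrix.toLin'_apply _ _

lemma exists_rank_factorization {n : ℕ} (B : Matrix (Fin n) (Fin n) (ZMod 2)) :
    ∃ (D : Matrix (Fin n) (Fin B.rank) (ZMod 2)) (Hm : Matrix (Fin B.rank) (Fin n) (ZMod 2)),
      B = D * Hm := by
  have hfr : Module.finrank (ZMod 2) (LinearMap.range B.mulVecLin) = B.rank := rfl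
  let b : Module.Basis (Fin B.rank) (ZMod 2) (LinearMap.range B.mulVecLin) :=
    Module.finBasisOfFinrankEq _ _ hfr
  have hcol : ∀ j : Fin n, (fun i => B i j) ∈ LinearMap.range B.mulVecLin := by
    intro j
    exact ⟨Pi.single j 1, by ext i; simp [Matrix.mulVecLin_apply, Matrix.mulVec_single]⟩
  refine ⟨fun i k => (b k : Fin n → ZMod 2) i,
          fun k j => b.repr ⟨fun i => B i j, hcol j⟩ k, ?_⟩
  ext i j
  have h1 := b.sum_repr ⟨fun i => B i j, hcol j⟩
  have h2 := congrArg (fun v : LinearMap.range B.mulVecLin => (v : Fin n → ZMod 2) i) h1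
  simp only [Submodule.coe_sum, Submodule.coe_smul, Finset.sum_apply, Pi.smul_apply,
    smul_eq_mul] at h2
  erw [Matrix.mul_apply]
  rw [← h2]
  exact Finset.sum_congr rfl fun k _ => mul_comm _ _

lemma exists_big_fiber {n w : ℕ} (h : Fin w → (Fin n → ZMod 2) → ZMod 2) :
    ∃ p : Fin w → ZMod 2,
      (2:ℝ) ^ ((n:ℝ) - w) ≤
        ((Finset.univ.filter fun x : Fin n → ZMod 2 => (fun t => h t x) = p).card : ℝ) := by
  classical
  have hcard : (Finset.univ : Finset (Fin n → ZMod 2)).card = 2 ^ n := by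
    simp [Finset.card_univ, ZMod.card]
  have hsum : (2:ℕ) ^ n = ∑ p : Fin w → ZMod 2,
      (Finset.univ.filter fun x : Fin n → ZMod 2 => (fun t => h t x) = p).card := by
    rw [← hcard]
    exact Finset.card_eq_sum_card_fiberwise (fun x _ => Finset.mem_univ _)
  have hne : (Finset.univ : Finset (Fin w → ZMod 2)).Nonempty := Finset.univ_nonempty
  have key : ∑ p : Fin w → ZMod 2, (2:ℝ) ^ ((n:ℝ) - w) ≤ ∑ p : Fin w → ZMod 2,
      ((Finset.univ.filter fun x : Fin n → ZMod 2 => (fun t => h t x) = p).card : ℝ) := by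
    have h1 : ∑ p : Fin w → ZMod 2, (2:ℝ) ^ ((n:ℝ) - w)
        = (2:ℝ) ^ w * (2:ℝ) ^ ((n:ℝ) - w) := by
      rw [Finset.sum_const, Finset.card_univ]
      simp [ZMod.card, nsmul_eq_mul]
    have h2 : (2:ℝ) ^ w * (2:ℝ) ^ ((n:ℝ) - w) = (2:ℝ) ^ n := by
      rw [← Real.rpow_natCast 2 w, ← Real.rpow_natCast 2 n, ← Real.rpow_add (by norm_num)]
      ring_nf
    rw [h1, h2]
    have := congrArg (fun k : ℕ => (k : ℝ)) hsum
    push_cast at this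
    rw [← this]
  obtain ⟨p, _, hp⟩ := Finset.exists_le_of_sum_le hne key
  exact ⟨p, hp⟩

theorem stmt_13
    (H : ∃ c : ℝ, 0 < c ∧ ∀ (n r s : ℕ) (A : Matrix (Fin n) (Fin n) (ZMod 2)),
        IsRigidMatrix A r s → IsRigidFunc n A.mulVec (c * r) (c * s)) :
    ∃ c' : ℝ, 0 < c' ∧ ∀ (n w d : ℕ) (f : (Fin n → ZMod 2) → Fin n → ZMod 2),
      IsLinearMap (ZMod 2) f → Depth2 n n w d f →
      ∃ w' : ℕ, (w' : ℝ) ≤ c' * w ∧ LinDepth2 n w' (c' * d) f := by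
  classical
  obtain ⟨c, hc, hH⟩ := H
  refine ⟨1/c + 1, by positivity, ?_⟩
  intro n w d f hlin hcirc
  obtain ⟨A, hA⟩ := exists_matrix_of_linear f hlin
  set r : ℕ := ⌈(w:ℝ)/c⌉₊ with hr
  set s : ℕ := ⌈(d:ℝ)/c⌉₊ with hs
  have hwcr : (w:ℝ) ≤ c * r := by
    have := Nat.le_ceil ((w:ℝ)/c)
    calc (w:ℝ) = c * ((w:ℝ)/c) := by field_simp
      _ ≤ c * r := by exact mul_le_mul_of_nonneg_left this hc.le
  have hdcs : (d:ℝ) ≤ c * s := by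
    have := Nat.le_ceil ((d:ℝ)/c)
    calc (d:ℝ) = c * ((d:ℝ)/c) := by field_simp
      _ ≤ c * s := by exact mul_le_mul_of_nonneg_left this hc.le
  have hnotrigid : ¬ IsRigidMatrix A r s := by
    intro hrig
    have hfun := hH n r s A hrig
    obtain ⟨h, S, g, hS, hloc, heq⟩ := hcirc
    obtain ⟨p, hp⟩ := exists_big_fiber h
    have hX : (2:ℝ) ^ ((n:ℝ) - c * r) ≤
        ((Finset.univ.filter fun x : Fin n → ZMod 2 => (fun t => h t x) = p).card : ℝ) := by
      refine le_trans (Real.rpow_le_rpow_of_exponent_le (by norm_num) ?_) hp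
      linarith
    have hSbound : ∀ i, ((S i).card : ℝ) ≤ c * s := by
      intro i
      have := hS i
      calc ((S i).card : ℝ) ≤ (d:ℝ) := by exact_mod_cast this
        _ ≤ c * s := hdcs
    obtain ⟨x, hxX, hx⟩ := hfun _ hX S hSbound (fun i x => g i x p)
      (fun i x y hxy => hloc i x y p hxy)
    apply hx
    funext i
    rw [← hA x, heq x i]
    congr 1
    exact (Finset.mem_filter.mp hxX).2
  rw [IsRigidMatrix, not_not] at hnotrigid
  obtain ⟨B, C, hBC, hrank, hsparse⟩ := hnotrigid
  obtain ⟨D, Hm, hfac⟩ := exists_rank_factorization B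
  have hrle : (r:ℝ) ≤ (w:ℝ)/c + 1 := le_of_lt (Nat.ceil_lt_add_one (by positivity))
  have hsle : (s:ℝ) ≤ (d:ℝ)/c + 1 := le_of_lt (Nat.ceil_lt_add_one (by positivity))
  refine ⟨B.rank, ?_, Hm, fun i => Finset.univ.filter fun j => C i j ≠ 0, C, D, ?_, ?_, ?_⟩
  · -- width bound
    rcases Nat.eq_zero_or_pos w with hw | hw
    · subst hw
      have : r = 0 := by simp [hr]
      have : B.rank = 0 := by omega
      simp [this]
    · have h1 : (B.rank : ℝ) ≤ (r:ℝ) := by exact_mod_cast hrank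
      have hw1 : (1:ℝ) ≤ (w:ℝ) := by exact_mod_cast hw
      calc (B.rank : ℝ) ≤ (w:ℝ)/c + 1 := h1.trans hrle
        _ ≤ (w:ℝ)/c + (w:ℝ) := by linarith
        _ = (1/c + 1) * w := by ring
  · -- degree bound
    intro i
    have h1 : ((Finset.univ.filter fun j => C i j ≠ 0).card : ℝ) ≤ (s:ℝ) := by
      exact_mod_cast hsparse i
    rcases Nat.eq_zero_or_pos d with hd | hd
    · subst hd
      have : s = 0 := by simp [hs]
      rw [this] at h1
      simpa using h1
    · have hd1 : (1:ℝ) ≤ (d:ℝ) := by exact_mod_cast hd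
      calc ((Finset.univ.filter fun j => C i j ≠ 0).card : ℝ) ≤ (s:ℝ) := h1
        _ ≤ (d:ℝ)/c + 1 := hsle
        _ ≤ (d:ℝ)/c + (d:ℝ) := by linarith
        _ = (1/c + 1) * d := by ring
  · intro i j hj
    by_contra hne
    exact hj (Finset.mem_filter.mpr ⟨Finset.mem_univ _, hne⟩)
  · intro x
    rw [hA x, hBC, Matrix.add_mulVec, Matrix.mulVec_mulVec, ← hfac, add_comm]
end
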